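/- (Abstract core of the Parameter Reconstruction Error Estimate, Section 4.4.) Let N ≥ 1 and let μ_0, μ_1, …, μ_N ∈ L^∞(X) with μ_1, …, μ_N linearly independent, and for t ∈ ℝ^N write μ(t) := μ_0 + Σ_{j=1}^N t_j μ_j. Let t†, t̂ ∈ ℝ^N, set μ† := μ(t†) and μ̂ := μ(t̂), let u†, u_h†, û, û_h ∈ L²(X), and let C_s > 0. Assume: (i) stability: ‖μ̂ − μ†‖_{L^∞} ≤ C_s ‖Q[μ̂ · û] − Q[μ† · u†]‖_{L²}; (ii) quasi-minimality: ‖Q[μ̂ · û_h] − Q[μ† · u†]‖_{L²} ≤ ‖Q[μ† · u_h†] − Q[μ† · u†]‖_{L²}; (iii) smallness: C_s C_Q ‖û − û_h‖_{L²} ≤ 1/2. Then there exists a constant C_μ > 0 depending only on μ_1, …, μ_N such that ‖t̂ − t†‖_{ℝ^N} ≤ 2 C_μ C_s C_Q ‖μ†‖_{L^∞} ( ‖u† − u_h†‖_{L²} + ‖û − û_h‖_{L²} ), where ‖·‖_{ℝ^N} is the Euclidean norm. -/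

import Mathlib

set_option maxHeartbeats 1000000

open scoped BigOperators
open MeasureTheory

-- auxiliary: L∞ multiplier bound on differences of toLp elements
lemma mul_toLp_sub_norm_le {X : Type*} [MeasurableSpace X] {m : Measure X}
    (g : Lp ℝ ⊤ m) (v w : Lp ℝ 2 m)
    (hA : MemLp (fun x => g x * v x) 2 m) (hB : MemLp (fun x => g x * w x) 2 m) :
    ‖hA.toLp _ - hB.toLp _‖ ≤ ‖g‖ * ‖v - w‖ := by
  rw [← MemLp.toLp_sub hA hB, Lp.norm_toLp]
  have hae : ((fun x => g x * v x) - fun x => g x * w x) =ᵐ[m] (⇑g • ⇑(v - w)) := by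
    filter_upwards [Lp.coeFn_sub v w] with x hx
    simp only [Pi.sub_apply, Pi.smul_apply', smul_eq_mul, hx]
    ring
  rw [eLpNorm_congr_ae hae]
  have hle := eLpNorm_smul_le_eLpNorm_top_mul_eLpNorm (μ := m) 2
    (Lp.aestronglyMeasurable (v - w)) ⇑g
  have hfin : eLpNorm (⇑g) ⊤ m * eLpNorm (⇑(v - w)) 2 m ≠ ⊤ :=
    ENNReal.mul_ne_top (Lp.eLpNorm_ne_top g) (Lp.eLpNorm_ne_top (v - w))
  calc (eLpNorm (⇑g • ⇑(v - w)) 2 m).toReal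
      ≤ (eLpNorm (⇑g) ⊤ m * eLpNorm (⇑(v - w)) 2 m).toReal := ENNReal.toReal_mono hfin hle
    _ = ‖g‖ * ‖v - w‖ := by rw [ENNReal.toReal_mul, Lp.norm_def, Lp.norm_def]

theorem parameter_reconstruction_error_estimate
    {X : Type*} [MeasurableSpace X] (m : Measure X)
    {N : ℕ} (hN : 1 ≤ N)
    (μ0 : Lp ℝ ⊤ m) (μ : Fin N → Lp ℝ ⊤ m)
    (hind : LinearIndependent ℝ μ) :
    ∃ Cμ : ℝ, 0 < Cμ ∧
      ∀ (tt th : Fin N → ℝ) (ut uth uh uhh : Lp ℝ 2 m)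
        (h1 : MemLp (fun x => (μ0 + ∑ j, th j • μ j) x * uh x) 2 m)
        (h2 : MemLp (fun x => (μ0 + ∑ j, th j • μ j) x * uhh x) 2 m)
        (h3 : MemLp (fun x => (μ0 + ∑ j, tt j • μ j) x * ut x) 2 m)
        (h4 : MemLp (fun x => (μ0 + ∑ j, tt j • μ j) x * uth x) 2 m)
        (Q : Lp ℝ 2 m →L[ℝ] Lp ℝ 2 m) (CQ Cs : ℝ),
        ‖Q‖ ≤ CQ → 0 < Cs →
        ‖(μ0 + ∑ j, th j • μ j) - (μ0 + ∑ j, tt j • μ j)‖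
            ≤ Cs * ‖Q (h1.toLp _) - Q (h3.toLp _)‖ →
        ‖Q (h2.toLp _) - Q (h3.toLp _)‖ ≤ ‖Q (h4.toLp _) - Q (h3.toLp _)‖ →
        Cs * CQ * ‖uh - uhh‖ ≤ 1 / 2 →
        Real.sqrt (∑ j, (th j - tt j) ^ 2)
          ≤ 2 * Cμ * Cs * CQ * ‖μ0 + ∑ j, tt j • μ j‖ * (‖ut - uth‖ + ‖uh - uhh‖) := by
  -- the norm-equivalence constant
  set E := EuclideanSpace ℝ (Fin N)
  let f : E →ₗ[ℝ] Lp ℝ ⊤ m :=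
    { toFun := fun c => ∑ j, c j • μ j
      map_add' := by
        intro a b
        show ∑ j, (a j + b j) • μ j = _
        simp [add_smul, Finset.sum_add_distrib]
      map_smul' := by
        intro r a
        show ∑ j, (r * a j) • μ j = _
        simp [smul_smul, Finset.smul_sum] }
  have hker : LinearMap.ker f = ⊥ := by
    rw [LinearMap.ker_eq_bot]
    intro a b hab
    have h0 : f (a - b) = 0 := by
      rw [map_sub, hab, sub_self]
    have := Fintype.linearIndependent_iff.mp hind (fun j => (a - b) j) (by
      simpa [f] using h0)
    ext j
    have := this j
    have : a j - b j = 0 := this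
    linarith [this]
  obtain ⟨K, hKpos, hK⟩ := f.exists_antilipschitzWith hker
  refine ⟨K, hKpos, ?_⟩
  intro tt th ut uth uh uhh h1 h2 h3 h4 Q CQ Cs hQ hCs hstab hquasi hsmall
  have hCQ0 : 0 ≤ CQ := le_trans (norm_nonneg Q) hQ
  set μh := μ0 + ∑ j, th j • μ j with hμh
  set μt := μ0 + ∑ j, tt j • μ j with hμt
  set D := ‖Q (h1.toLp _) - Q (h3.toLp _)‖ with hD
  set A := ‖ut - uth‖ with hA
  set B := ‖uh - uhh‖ with hB
  set M := ‖μt‖ with hM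
  have hA0 : 0 ≤ A := norm_nonneg _
  have hB0 : 0 ≤ B := norm_nonneg _
  have hM0 : 0 ≤ M := norm_nonneg _
  have hD0 : 0 ≤ D := norm_nonneg _
  -- Q difference bounds
  have qbound : ∀ a b : Lp ℝ 2 m, ‖Q a - Q b‖ ≤ CQ * ‖a - b‖ := by
    intro a b
    rw [← map_sub]
    exact (Q.le_opNorm _).trans (mul_le_mul_of_nonneg_right hQ (norm_nonneg _))
  have h12 : ‖Q (h1.toLp _) - Q (h2.toLp _)‖ ≤ CQ * (‖μh‖ * B) := by
    refine (qbound _ _).trans (mul_le_mul_of_nonneg_left ?_ hCQ0)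
    exact mul_toLp_sub_norm_le μh uh uhh h1 h2
  have h43 : ‖Q (h4.toLp _) - Q (h3.toLp _)‖ ≤ CQ * (M * A) := by
    refine (qbound _ _).trans (mul_le_mul_of_nonneg_left ?_ hCQ0)
    have := mul_toLp_sub_norm_le μt uth ut h4 h3
    rwa [norm_sub_rev uth ut] at this
  have hμhM : ‖μh‖ ≤ M + Cs * D := by
    calc ‖μh‖ = ‖μt + (μh - μt)‖ := by congr 1; abel
      _ ≤ M + ‖μh - μt‖ := norm_add_le _ _
      _ ≤ M + Cs * D := by linarith [hstab]
  -- main bound on D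
  have hDbound : D ≤ CQ * ((M + Cs * D) * B) + CQ * (M * A) := by
    calc D ≤ ‖Q (h1.toLp _) - Q (h2.toLp _)‖ + ‖Q (h2.toLp _) - Q (h3.toLp _)‖ :=
          norm_sub_le_norm_sub_add_norm_sub _ _ _
      _ ≤ CQ * (‖μh‖ * B) + CQ * (M * A) := add_le_add h12 (hquasi.trans h43)
      _ ≤ CQ * ((M + Cs * D) * B) + CQ * (M * A) := by
          have : ‖μh‖ * B ≤ (M + Cs * D) * B := mul_le_mul_of_nonneg_right hμhM hB0
          nlinarith
  have hD2 : D ≤ 2 * CQ * M * (A + B) := by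
    have hhalf : CQ * (Cs * D * B) ≤ D / 2 := by
      have := mul_le_mul_of_nonneg_right hsmall hD0
      nlinarith
    nlinarith
  -- norm equivalence step
  have hsqrt : Real.sqrt (∑ j, (th j - tt j) ^ 2) ≤ K * ‖μh - μt‖ := by
    set c : E := (WithLp.equiv 2 (Fin N → ℝ)).symm (th - tt) with hc
    have hnorm : ‖c‖ = Real.sqrt (∑ j, (th j - tt j) ^ 2) := by
      rw [EuclideanSpace.norm_eq]
      congr 1
      refine Finset.sum_congr rfl fun j _ => ?_
      simp [hc, Real.norm_eq_abs, sq_abs]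
    have hfc : f c = μh - μt := by
      simp only [hμh, hμt, add_sub_add_left_eq_sub, ← Finset.sum_sub_distrib, ← sub_smul]
      rfl
    have := hK.le_mul_dist c 0
    rw [dist_zero_right, map_zero, dist_zero_right, hfc, hnorm] at this
    exact this.trans (le_of_eq rfl)
  calc Real.sqrt (∑ j, (th j - tt j) ^ 2)
      ≤ K * ‖μh - μt‖ := hsqrt
    _ ≤ K * (Cs * D) := by
        have hK0 : (0:ℝ) ≤ K := le_of_lt (by exact_mod_cast hKpos)
        exact mul_le_mul_of_nonneg_left hstab hK0
    _ ≤ 2 * K * Cs * CQ * M * (A + B) := by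
        have hK0 : (0:ℝ) ≤ K := le_of_lt (by exact_mod_cast hKpos)
        nlinarith [mul_le_mul_of_nonneg_left hD2 (mul_nonneg hK0 hCs.le)]
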